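/- For the augmented matrix Ã = [[A, b₁],[0, 0]] of size (n+1)×(n+1), where A is n×n and b₁ ∈ ℝⁿ, the top n entries of e^{Ã} applied to the vector (v, 1) equal e^{A}v + φ₁(A)b₁, where φ₁(A) = ∑_{k≥0} A^k/(k+1)!. -/

import Mathlib

open Matrix

/-- Evaluation of `M *ᵥ w` at index `j`, as a continuous linear map in `M`. -/
noncomputable def matEvalCLM {ι : Type*} [Fintype ι] [DecidableEq ι] (w : ι → ℝ) (j : ι) :
    Matrix ι ι ℝ →L[ℝ] ℝ :=
  LinearMap.toContinuousLinearMap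
    { toFun := fun M => (M *ᵥ w) j
      map_add' := fun M N => by simp [Matrix.add_mulVec]
      map_smul' := fun c M => by simp [Matrix.smul_mulVec] }

theorem matEvalCLM_smul {ι : Type*} [Fintype ι] [DecidableEq ι] (w : ι → ℝ) (j : ι)
    (c : ℝ) (M : Matrix ι ι ℝ) :
    matEvalCLM w j (c • M) = c * (M *ᵥ w) j := by
  simp [matEvalCLM, Matrix.smul_mulVec]

/-- The augmented-matrix trick: the top block of e^{Ã}(v,1) is e^A v + φ₁(A) b₁,
where Ã = [[A, b₁],[0,0]] and φ₁(A) = ∑_{k≥0} A^k/(k+1)!. -/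
theorem augmented_matrix_phi1 {n : ℕ} (A : Matrix (Fin n) (Fin n) ℝ)
    (b₁ v : Fin n → ℝ) :
    ∀ i : Fin n,
      (NormedSpace.exp (Matrix.fromBlocks A (Matrix.of fun i (_ : Unit) => b₁ i)
          (0 : Matrix Unit (Fin n) ℝ) (0 : Matrix Unit Unit ℝ)) *ᵥ
        Sum.elim v (fun _ => 1)) (Sum.inl i) =
      (NormedSpace.exp A *ᵥ v) i +
        ((∑' k : ℕ, ((Nat.factorial (k + 1) : ℝ))⁻¹ • A ^ k) *ᵥ b₁) i := by
  intro i
  classical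
  set B : Matrix (Fin n) Unit ℝ := Matrix.of fun i (_ : Unit) => b₁ i with hB
  set Aug : Matrix (Fin n ⊕ Unit) (Fin n ⊕ Unit) ℝ :=
    Matrix.fromBlocks A B 0 0 with hAug
  letI : SeminormedRing (Matrix (Fin n ⊕ Unit) (Fin n ⊕ Unit) ℝ) := Matrix.linftyOpSemiNormedRing
  letI : NormedRing (Matrix (Fin n ⊕ Unit) (Fin n ⊕ Unit) ℝ) := Matrix.linftyOpNormedRing
  letI : NormedAlgebra ℝ (Matrix (Fin n ⊕ Unit) (Fin n ⊕ Unit) ℝ) := Matrix.linftyOpNormedAlgebra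
  letI : SeminormedRing (Matrix (Fin n) (Fin n) ℝ) := Matrix.linftyOpSemiNormedRing
  letI : NormedRing (Matrix (Fin n) (Fin n) ℝ) := Matrix.linftyOpNormedRing
  letI : NormedAlgebra ℝ (Matrix (Fin n) (Fin n) ℝ) := Matrix.linftyOpNormedAlgebra
  -- powers of the augmented matrix
  have hpow : ∀ k : ℕ, Aug ^ (k + 1) = Matrix.fromBlocks (A ^ (k + 1)) (A ^ k * B) 0 0 := by
    intro k
    induction k with
    | zero => simp [hAug, pow_succ, pow_zero]
    | succ m ih =>
      rw [pow_succ, ih, hAug, Matrix.fromBlocks_multiply]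
      simp [← pow_succ, Matrix.mul_assoc]
  -- summability facts
  have hsAug : Summable fun k : ℕ => ((k.factorial : ℝ))⁻¹ • Aug ^ k :=
    NormedSpace.expSeries_summable' Aug
  have hsA : Summable fun k : ℕ => ((k.factorial : ℝ))⁻¹ • A ^ k :=
    NormedSpace.expSeries_summable' A
  have hsA' : Summable fun k : ℕ => ((Nat.factorial (k + 1) : ℝ))⁻¹ • A ^ k := by
    refine Summable.of_norm_bounded (NormedSpace.norm_expSeries_summable' (𝕂 := ℝ) A) fun k => ?_
    rw [norm_smul, norm_smul]
    have h1 : ‖((Nat.factorial (k+1) : ℝ))⁻¹‖ ≤ ‖((Nat.factorial k : ℝ))⁻¹‖ := by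
      rw [Real.norm_eq_abs, Real.norm_eq_abs, abs_of_nonneg (by positivity),
        abs_of_nonneg (by positivity)]
      apply inv_anti₀
      · exact_mod_cast Nat.factorial_pos k
      · exact_mod_cast Nat.factorial_le (Nat.le_succ k)
    exact mul_le_mul_of_nonneg_right h1 (norm_nonneg _)
  -- evaluation maps
  set w : Fin n ⊕ Unit → ℝ := Sum.elim v (fun _ => 1) with hw
  have hL : ∀ (M : Matrix (Fin n ⊕ Unit) (Fin n ⊕ Unit) ℝ),
      matEvalCLM w (Sum.inl i) M = (M *ᵥ w) (Sum.inl i) := fun _ => rfl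
  have hLv : ∀ (M : Matrix (Fin n) (Fin n) ℝ),
      matEvalCLM v i M = (M *ᵥ v) i := fun _ => rfl
  have hLb : ∀ (M : Matrix (Fin n) (Fin n) ℝ),
      matEvalCLM b₁ i M = (M *ᵥ b₁) i := fun _ => rfl
  -- expand LHS
  have lhs_eq : (NormedSpace.exp Aug *ᵥ w) (Sum.inl i)
      = ∑' k : ℕ, ((k.factorial : ℝ))⁻¹ * ((Aug ^ k *ᵥ w) (Sum.inl i)) := by
    rw [← hL, NormedSpace.exp_eq_tsum (𝕂 := ℝ), ContinuousLinearMap.map_tsum _ hsAug]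
    congr 1; ext k
    rw [matEvalCLM_smul]
  -- compute each term of LHS
  have hterm : ∀ k : ℕ, (Aug ^ (k + 1) *ᵥ w) (Sum.inl i)
      = (A ^ (k + 1) *ᵥ v) i + (A ^ k *ᵥ b₁) i := by
    intro k
    rw [hpow k, hw, Matrix.fromBlocks_mulVec]
    simp [Matrix.mulVec, Matrix.mul_apply, dotProduct, hB]
  -- expand RHS pieces
  have rhs1 : (NormedSpace.exp A *ᵥ v) i
      = ∑' k : ℕ, ((k.factorial : ℝ))⁻¹ * ((A ^ k *ᵥ v) i) := by
    rw [← hLv, NormedSpace.exp_eq_tsum (𝕂 := ℝ), ContinuousLinearMap.map_tsum _ hsA]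
    congr 1; ext k
    rw [matEvalCLM_smul]
  have rhs2 : ((∑' k : ℕ, ((Nat.factorial (k + 1) : ℝ))⁻¹ • A ^ k) *ᵥ b₁) i
      = ∑' k : ℕ, ((Nat.factorial (k + 1) : ℝ))⁻¹ * ((A ^ k *ᵥ b₁) i) := by
    rw [← hLb, ContinuousLinearMap.map_tsum _ hsA']
    congr 1; ext k
    rw [matEvalCLM_smul]
  rw [lhs_eq, rhs1, rhs2]
  -- summability of the scalar series
  have sv : Summable fun k : ℕ => ((k.factorial : ℝ))⁻¹ * ((A ^ k *ᵥ v) i) := by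
    have := (hsA.map (matEvalCLM v i : Matrix (Fin n) (Fin n) ℝ →L[ℝ] ℝ)
      (matEvalCLM v i).continuous)
    exact this.congr fun k => by simp only [Function.comp_apply, matEvalCLM_smul]
  have sb : Summable fun k : ℕ => ((Nat.factorial (k + 1) : ℝ))⁻¹ * ((A ^ k *ᵥ b₁) i) := by
    have := (hsA'.map (matEvalCLM b₁ i : Matrix (Fin n) (Fin n) ℝ →L[ℝ] ℝ)
      (matEvalCLM b₁ i).continuous)
    exact this.congr fun k => by simp only [Function.comp_apply, matEvalCLM_smul]
  have sL : Summable fun k : ℕ => ((k.factorial : ℝ))⁻¹ * ((Aug ^ k *ᵥ w) (Sum.inl i)) := by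
    have := (hsAug.map (matEvalCLM w (Sum.inl i)) (matEvalCLM w (Sum.inl i)).continuous)
    exact this.congr fun k => by simp only [Function.comp_apply, matEvalCLM_smul]
  rw [Summable.tsum_eq_zero_add sL, Summable.tsum_eq_zero_add sv]
  have h0 : ((Nat.factorial 0 : ℝ))⁻¹ * ((Aug ^ 0 *ᵥ w) (Sum.inl i)) = v i := by
    simp [hw]
  have h0' : ((Nat.factorial 0 : ℝ))⁻¹ * ((A ^ 0 *ᵥ v) i) = v i := by simp
  rw [h0, h0']
  have : ∀ k : ℕ, ((Nat.factorial (k+1) : ℝ))⁻¹ * ((Aug ^ (k+1) *ᵥ w) (Sum.inl i))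
      = ((Nat.factorial (k+1) : ℝ))⁻¹ * ((A ^ (k+1) *ᵥ v) i)
        + ((Nat.factorial (k+1) : ℝ))⁻¹ * ((A ^ k *ᵥ b₁) i) := by
    intro k; rw [hterm k, mul_add]
  rw [tsum_congr this, Summable.tsum_add (by exact sv.comp_injective (add_left_injective 1)) sb]
  ring
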